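/- Fix constants a > 0, a real number b, and a natural n. For fixed r > b, the function t ↦ (2a√t)ⁿ · iⁿerfc((b − r)/(2a√t)) tends to (2/n!)·(r − b)ⁿ as t → 0⁺. -/

import Mathlib

open MeasureTheory Filter

/-- The `n`-th iterated integral of the complementary error function:
`ierfc 0 x = erfc x = (2/√π) ∫ₓ^∞ exp(-t²) dt` and
`ierfc (n+1) x = ∫ₓ^∞ ierfc n t dt`. -/
noncomputable def ierfc : ℕ → ℝ → ℝ
  | 0, x => (2 / Real.sqrt Real.pi) * ∫ t in Set.Ioi x, Real.exp (-t ^ 2)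
  | n + 1, x => ∫ t in Set.Ioi x, ierfc n t

namespace IerfcAux

open Set Real

lemma int_gauss : Integrable (fun s : ℝ => Real.exp (-s ^ 2)) := by
  have := integrable_exp_neg_mul_sq (b := (1:ℝ)) one_pos
  simpa using this

lemma pow_le_factorial_mul_exp (k : ℕ) {x : ℝ} (hx : 0 ≤ x) :
    x ^ k ≤ (k.factorial : ℝ) * Real.exp x := by
  have h1 : x ^ k / (k.factorial : ℝ) ≤ Real.exp x := by
    have hs := Real.sum_le_exp_of_nonneg hx (k + 1)
    refine le_trans ?_ hs
    have h2 : x ^ k / (k.factorial : ℝ) =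
        ∑ i ∈ Finset.range (k+1), if i = k then x ^ i / (i.factorial : ℝ) else 0 := by
      rw [Finset.sum_ite_eq' (Finset.range (k+1)) k]
      simp
    rw [h2]
    apply Finset.sum_le_sum
    intro i _
    split_ifs
    · exact le_rfl
    · positivity
  have hk : (0:ℝ) < (k.factorial : ℝ) := by positivity
  calc x ^ k = (k.factorial : ℝ) * (x ^ k / (k.factorial : ℝ)) := by field_simp
    _ ≤ (k.factorial : ℝ) * Real.exp x := mul_le_mul_of_nonneg_left h1 hk.le

lemma int_abs_pow_gauss (k : ℕ) :
    Integrable (fun t : ℝ => |t| ^ k * Real.exp (-t ^ 2)) := by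
  have hg : Integrable (fun t : ℝ =>
      ((k.factorial : ℝ) * Real.exp 1) * Real.exp (-(1/2 : ℝ) * t ^ 2)) :=
    (integrable_exp_neg_mul_sq (by norm_num : (0:ℝ) < 1/2)).const_mul _
  apply hg.mono'
  · apply Continuous.aestronglyMeasurable
    fun_prop
  · refine Filter.Eventually.of_forall fun t => ?_
    have h1 : |t| ^ k ≤ (k.factorial : ℝ) * Real.exp |t| :=
      pow_le_factorial_mul_exp k (abs_nonneg t)
    have h3 : Real.exp |t| * Real.exp (-t ^ 2) ≤ Real.exp 1 * Real.exp (-(1/2:ℝ) * t ^ 2) := by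
      rw [← Real.exp_add, ← Real.exp_add]
      apply Real.exp_le_exp.2
      nlinarith [sq_abs t, abs_nonneg t, sq_nonneg (|t| - 1)]
    have hnn : (0:ℝ) ≤ |t| ^ k * Real.exp (-t ^ 2) := by positivity
    rw [Real.norm_eq_abs, abs_of_nonneg hnn]
    calc |t| ^ k * Real.exp (-t ^ 2)
        ≤ ((k.factorial : ℝ) * Real.exp |t|) * Real.exp (-t ^ 2) :=
          mul_le_mul_of_nonneg_right h1 (Real.exp_pos _).le
      _ = (k.factorial : ℝ) * (Real.exp |t| * Real.exp (-t ^ 2)) := by ring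
      _ ≤ (k.factorial : ℝ) * (Real.exp 1 * Real.exp (-(1/2:ℝ) * t ^ 2)) :=
          mul_le_mul_of_nonneg_left h3 (by positivity)
      _ = ((k.factorial : ℝ) * Real.exp 1) * Real.exp (-(1/2 : ℝ) * t ^ 2) := by ring

lemma add_pow_le' {u v : ℝ} (hu : 0 ≤ u) (hv : 0 ≤ v) (k : ℕ) :
    (u + v) ^ k ≤ 2 ^ k * (u ^ k + v ^ k) := by
  have h1 : u + v ≤ 2 * max u v := by
    rcases le_total u v with h | h
    · rw [max_eq_right h]; linarith
    · rw [max_eq_left h]; linarith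
  calc (u + v) ^ k ≤ (2 * max u v) ^ k := by
        apply pow_le_pow_left₀ (by linarith) h1
    _ = 2 ^ k * (max u v) ^ k := mul_pow _ _ _
    _ ≤ 2 ^ k * (u ^ k + v ^ k) := by
        apply mul_le_mul_of_nonneg_left _ (by positivity)
        rcases max_choice u v with h | h <;> rw [h]
        · nlinarith [pow_nonneg hv k]
        · nlinarith [pow_nonneg hu k]

lemma integrable_sub_pow_gauss (k : ℕ) (x : ℝ) :
    Integrable (fun t : ℝ => (t - x) ^ k * Real.exp (-t ^ 2)) := by
  have hg : Integrable (fun t : ℝ =>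
      2 ^ k * (|t| ^ k * Real.exp (-t ^ 2)) + (2 ^ k * |x| ^ k) * Real.exp (-t ^ 2)) :=
    ((int_abs_pow_gauss k).const_mul _).add (int_gauss.const_mul _)
  apply hg.mono'
  · apply Continuous.aestronglyMeasurable
    fun_prop
  · refine Filter.Eventually.of_forall fun t => ?_
    rw [Real.norm_eq_abs, abs_mul, abs_of_nonneg (Real.exp_pos _).le, abs_pow]
    have h1 : |t - x| ^ k ≤ 2 ^ k * (|t| ^ k + |x| ^ k) := by
      calc |t - x| ^ k ≤ (|t| + |x|) ^ k :=
            pow_le_pow_left₀ (abs_nonneg _) (abs_sub _ _) k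
        _ ≤ 2 ^ k * (|t| ^ k + |x| ^ k) := add_pow_le' (abs_nonneg _) (abs_nonneg _) k
    calc |t - x| ^ k * Real.exp (-t ^ 2)
        ≤ (2 ^ k * (|t| ^ k + |x| ^ k)) * Real.exp (-t ^ 2) :=
          mul_le_mul_of_nonneg_right h1 (Real.exp_pos _).le
      _ = 2 ^ k * (|t| ^ k * Real.exp (-t ^ 2)) + (2 ^ k * |x| ^ k) * Real.exp (-t ^ 2) := by
          ring

/-- Closed form for `ierfc`. -/
lemma ierfc_eq (n : ℕ) (x : ℝ) :
    ierfc n x = (2 / Real.sqrt Real.pi) *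
      ∫ t in Set.Ioi x, (t - x) ^ n / (n.factorial : ℝ) * Real.exp (-t ^ 2) := by
  induction n generalizing x with
  | zero => simp [ierfc]
  | succ n ih =>
    have hstep : ierfc (n + 1) x = ∫ s in Set.Ioi x, ierfc n s := rfl
    rw [hstep]
    simp_rw [ih]
    rw [integral_const_mul]
    congr 1
    -- the Fubini step
    set G : ℝ × ℝ → ℝ := fun q =>
      Set.indicator {q : ℝ × ℝ | x < q.1 ∧ q.1 < q.2}
        (fun q => (q.2 - q.1) ^ n / (n.factorial : ℝ) * Real.exp (-q.2 ^ 2)) q with hG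
    have hS : MeasurableSet {q : ℝ × ℝ | x < q.1 ∧ q.1 < q.2} :=
      (measurableSet_lt measurable_const measurable_fst).inter
        (measurableSet_lt measurable_fst measurable_snd)
    have hGcont : Continuous fun q : ℝ × ℝ =>
        (q.2 - q.1) ^ n / (n.factorial : ℝ) * Real.exp (-q.2 ^ 2) := by
      fun_prop
    have hGm : AEStronglyMeasurable G (volume.prod volume) :=
      hGcont.aestronglyMeasurable.indicator hS
    have hGnonneg : ∀ q, 0 ≤ G q := by
      intro q
      rw [hG]
      apply Set.indicator_nonneg
      intro q hq
      have h2 : q.1 < q.2 := hq.2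
      have : (0:ℝ) ≤ q.2 - q.1 := by linarith
      positivity
    -- slices in s for fixed t
    have h1 : ∀ t : ℝ, (fun s => G (s, t)) =
        (Set.Ioo x t).indicator (fun s => (t - s) ^ n / (n.factorial : ℝ) * Real.exp (-t ^ 2)) := by
      intro t
      funext s
      simp only [hG, Set.indicator_apply, Set.mem_setOf_eq, Set.mem_Ioo]
    have hsliceInt : ∀ t : ℝ, Integrable (fun s => G (s, t)) := by
      intro t
      rw [h1 t]
      apply (IntegrableOn.integrable_indicator _ measurableSet_Ioo)
      exact ((by fun_prop : Continuous fun s : ℝ =>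
        (t - s) ^ n / (n.factorial : ℝ) * Real.exp (-t ^ 2)).integrableOn_Icc).mono_set
        Set.Ioo_subset_Icc_self
    -- inner integral over s for fixed t
    have hplain : ∀ t : ℝ, (∫ s, G (s, t)) =
        (Set.Ioi x).indicator
          (fun t => (t - x) ^ (n+1) / ((n+1).factorial : ℝ) * Real.exp (-t ^ 2)) t := by
      intro t
      rw [h1 t, integral_indicator measurableSet_Ioo]
      by_cases ht : x < t
      · rw [Set.indicator_of_mem (Set.mem_Ioi.2 ht)]
        have hle : x ≤ t := ht.le
        rw [← integral_Ioc_eq_integral_Ioo, ← intervalIntegral.integral_of_le hle]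
        have heq : (∫ s in x..t, (t - s) ^ n / (n.factorial : ℝ) * Real.exp (-t ^ 2)) =
            (∫ s in x..t, (t - s) ^ n) * ((n.factorial : ℝ)⁻¹ * Real.exp (-t ^ 2)) := by
          rw [← intervalIntegral.integral_mul_const]
          congr 1
          funext s
          ring
        rw [heq]
        have hsub : (∫ s in x..t, (t - s) ^ n) = (t - x) ^ (n+1) / ((n:ℝ) + 1) := by
          rw [intervalIntegral.integral_comp_sub_left (fun u => u ^ n) t]
          simp [integral_pow]
        rw [hsub, Nat.factorial_succ]
        have h4 : ((n:ℝ) + 1) ≠ 0 := by positivity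
        have h5 : ((n.factorial : ℝ)) ≠ 0 := by positivity
        push_cast
        field_simp
      · rw [Set.indicator_of_notMem (by simpa using ht)]
        have : Set.Ioo x t = ∅ := Set.Ioo_eq_empty (by simpa using ht)
        rw [this]
        simp
    have hnorm : ∀ t : ℝ, (∫ s, ‖G (s, t)‖) =
        (Set.Ioi x).indicator
          (fun t => (t - x) ^ (n+1) / ((n+1).factorial : ℝ) * Real.exp (-t ^ 2)) t := by
      intro t
      rw [← hplain t]
      congr 1
      funext s
      rw [Real.norm_eq_abs, abs_of_nonneg (hGnonneg _)]
    have hGint : Integrable G (volume.prod volume) := by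
      rw [integrable_prod_iff' hGm]
      constructor
      · exact Filter.Eventually.of_forall hsliceInt
      · refine Integrable.congr ?_ (Filter.Eventually.of_forall fun t => (hnorm t).symm)
        apply Integrable.indicator _ measurableSet_Ioi
        have h6 := (integrable_sub_pow_gauss (n+1) x).const_mul (((n+1).factorial : ℝ))⁻¹
        refine h6.congr (Filter.Eventually.of_forall fun t => ?_)
        ring
    -- slices in t for fixed s
    have h2 : ∀ s : ℝ, (∫ t, G (s, t)) =
        (Set.Ioi x).indicator
          (fun s => ∫ t in Set.Ioi s, (t - s) ^ n / (n.factorial : ℝ) * Real.exp (-t ^ 2)) s := by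
      intro s
      by_cases hs : x < s
      · rw [Set.indicator_of_mem (Set.mem_Ioi.2 hs), ← integral_indicator measurableSet_Ioi]
        congr 1
        funext t
        simp only [hG, Set.indicator_apply, Set.mem_setOf_eq, Set.mem_Ioi]
        by_cases ht : s < t <;> simp [ht, hs]
      · have hzero : (fun t => G (s, t)) = fun _ => (0:ℝ) := by
          funext t
          simp only [hG, Set.indicator_apply, Set.mem_setOf_eq]
          simp [hs]
        rw [hzero, Set.indicator_of_notMem (by simpa using hs)]
        simp
    have hswap : (∫ s, ∫ t, G (s, t)) = (∫ t, ∫ s, G (s, t)) :=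
      integral_integral_swap (f := fun s t => G (s, t)) hGint
    calc (∫ s in Set.Ioi x,
            ∫ t in Set.Ioi s, (t - s) ^ n / (n.factorial : ℝ) * Real.exp (-t ^ 2))
        = ∫ s, (Set.Ioi x).indicator
            (fun s => ∫ t in Set.Ioi s, (t - s) ^ n / (n.factorial : ℝ) * Real.exp (-t ^ 2)) s := by
          rw [integral_indicator measurableSet_Ioi]
      _ = ∫ s, ∫ t, G (s, t) := by
          congr 1; funext s; rw [h2 s]
      _ = ∫ t, ∫ s, G (s, t) := hswap
      _ = ∫ t, (Set.Ioi x).indicator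
            (fun t => (t - x) ^ (n+1) / ((n+1).factorial : ℝ) * Real.exp (-t ^ 2)) t := by
          congr 1; funext t; rw [hplain t]
      _ = ∫ t in Set.Ioi x, (t - x) ^ (n+1) / ((n+1).factorial : ℝ) * Real.exp (-t ^ 2) := by
          rw [integral_indicator measurableSet_Ioi]

end IerfcAux

open IerfcAux

/-- For `a > 0`, `r > b`, `(2a√t)^n * ierfc n ((b-r)/(2a√t)) → (2/n!)*(r-b)^n` as `t → 0⁺`. -/
theorem ierfc_scaled_neg_tendsto (a b r : ℝ) (ha : 0 < a) (n : ℕ) (hr : b < r) :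
    Tendsto (fun t : ℝ =>
        (2 * a * Real.sqrt t) ^ n * ierfc n ((b - r) / (2 * a * Real.sqrt t)))
      (nhdsWithin 0 (Set.Ioi 0))
      (nhds (2 / (Nat.factorial n : ℝ) * (r - b) ^ n)) := by
  set d : ℝ := r - b with hd
  have hd0 : 0 < d := by rw [hd]; linarith
  set l : Filter ℝ := nhdsWithin 0 (Set.Ioi 0) with hl
  set c : ℝ → ℝ := fun t => 2 * a * Real.sqrt t with hc
  set Φ : ℝ → ℝ → ℝ := fun e s =>
    (Set.Ioi (-(d / e))).indicator
      (fun s => (e * s + d) ^ n / (n.factorial : ℝ) * Real.exp (-s ^ 2)) s with hΦ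
  -- c t → 0 along l, and c t > 0 eventually
  have hct0 : Tendsto c l (nhds 0) := by
    have h0 : Tendsto c (nhds 0) (nhds 0) := by
      have hcc : Continuous c := by rw [hc]; fun_prop
      have := hcc.tendsto 0
      simpa [hc] using this
    exact h0.mono_left nhdsWithin_le_nhds
  have hcpos : ∀ᶠ t in l, 0 < c t := by
    rw [hl]
    filter_upwards [self_mem_nhdsWithin] with t ht
    have h7 : 0 < Real.sqrt t := Real.sqrt_pos.2 ht
    rw [hc]
    positivity
  -- rewrite of the function, eventually
  have hkey : (fun t => (2 * a * Real.sqrt t) ^ n * ierfc n ((b - r) / (2 * a * Real.sqrt t)))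
      =ᶠ[l] fun t => (2 / Real.sqrt Real.pi) * ∫ s, Φ (c t) s := by
    filter_upwards [hcpos] with t hctpos
    have hne : c t ≠ 0 := hctpos.ne'
    have harg : (b - r) / (2 * a * Real.sqrt t) = -(d / c t) := by
      rw [hc, hd, ← neg_sub, neg_div]
    rw [harg, ierfc_eq]
    rw [show (2 * a * Real.sqrt t) = c t from rfl]
    rw [mul_left_comm]
    congr 1
    rw [← integral_indicator measurableSet_Ioi, ← integral_const_mul]
    congr 1
    funext s
    simp only [hΦ]
    by_cases hs : s ∈ Set.Ioi (-(d / c t))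
    · rw [Set.indicator_of_mem hs, Set.indicator_of_mem hs]
      have h9 : c t ^ n * (s - -(d / c t)) ^ n = (c t * s + d) ^ n := by
        rw [← mul_pow]
        congr 1
        field_simp
        ring
      rw [← h9]
      ring
    · rw [Set.indicator_of_notMem hs, Set.indicator_of_notMem hs, mul_zero]
  -- the limit of the integrals
  have hlim : Tendsto (fun t => ∫ s, Φ (c t) s) l
      (nhds (∫ s, d ^ n / (n.factorial : ℝ) * Real.exp (-s ^ 2))) := by
    apply tendsto_integral_filter_of_dominated_convergence
      (bound := fun s => (2 ^ n * (|s| ^ n + d ^ n)) / (n.factorial : ℝ) * Real.exp (-s ^ 2))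
    · refine Filter.Eventually.of_forall fun t => ?_
      simp only [hΦ]
      exact ((by fun_prop : Continuous fun s : ℝ =>
        (c t * s + d) ^ n / (n.factorial : ℝ) * Real.exp (-s ^ 2)).aestronglyMeasurable).indicator
        measurableSet_Ioi
    · have hc1 : ∀ᶠ t in l, c t < 1 :=
        hct0.eventually (eventually_lt_nhds (by norm_num : (0:ℝ) < 1))
      filter_upwards [hcpos, hc1] with t hpos hle1
      refine Filter.Eventually.of_forall fun s => ?_
      simp only [hΦ]
      by_cases hs : s ∈ Set.Ioi (-(d / c t))
      · rw [Set.indicator_of_mem hs]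
        rw [Real.norm_eq_abs, abs_mul, abs_of_nonneg (Real.exp_pos _).le, abs_div, abs_pow,
          abs_of_nonneg (by positivity : (0:ℝ) ≤ (n.factorial : ℝ))]
        gcongr
        calc |c t * s + d| ^ n ≤ (|s| + d) ^ n := by
              apply pow_le_pow_left₀ (abs_nonneg _)
              calc |c t * s + d| ≤ |c t * s| + |d| := abs_add_le _ _
                _ = c t * |s| + d := by
                    rw [abs_mul, abs_of_nonneg hpos.le, abs_of_nonneg hd0.le]
                _ ≤ 1 * |s| + d := by nlinarith [abs_nonneg s]
                _ = |s| + d := by ring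
          _ ≤ 2 ^ n * (|s| ^ n + d ^ n) := add_pow_le' (abs_nonneg _) hd0.le n
      · rw [Set.indicator_of_notMem hs]
        simp only [norm_zero]
        positivity
    · apply Integrable.congr (((int_abs_pow_gauss n).const_mul (2 ^ n / (n.factorial : ℝ))).add
        (int_gauss.const_mul (2 ^ n * d ^ n / (n.factorial : ℝ))))
      refine Filter.Eventually.of_forall fun s => ?_
      simp only [Pi.add_apply]
      ring
    · refine Filter.Eventually.of_forall fun s => ?_
      have hev : (fun t => Φ (c t) s)
          =ᶠ[l] fun t => (c t * s + d) ^ n / (n.factorial : ℝ) * Real.exp (-s ^ 2) := by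
        have h2 : Tendsto (fun t => c t * (-s)) l (nhds 0) := by
          simpa using hct0.mul_const (-s)
        have h3 : ∀ᶠ t in l, c t * (-s) < d := h2.eventually (eventually_lt_nhds hd0)
        filter_upwards [hcpos, h3] with t hpos hlt
        have hmem : s ∈ Set.Ioi (-(d / c t)) := by
          rw [Set.mem_Ioi, neg_lt, lt_div_iff₀ hpos]
          calc -s * c t = c t * (-s) := mul_comm _ _
            _ < d := hlt
        simp only [hΦ]
        rw [Set.indicator_of_mem hmem]
      refine Tendsto.congr' hev.symm ?_
      have h8 : Tendsto (fun t => (c t * s + d) ^ n / (n.factorial : ℝ) * Real.exp (-s ^ 2)) l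
          (nhds ((0 * s + d) ^ n / (n.factorial : ℝ) * Real.exp (-s ^ 2))) := by
        apply Tendsto.mul _ tendsto_const_nhds
        apply Tendsto.div_const
        exact ((hct0.mul_const s).add_const d).pow n
      simpa using h8
  -- conclude
  have hval : (∫ s, d ^ n / (n.factorial : ℝ) * Real.exp (-s ^ 2))
      = d ^ n / (n.factorial : ℝ) * Real.sqrt Real.pi := by
    rw [integral_const_mul]
    congr 1
    have hgauss := integral_gaussian 1
    simpa using hgauss
  have hfinal : (2 / Real.sqrt Real.pi) * (d ^ n / (n.factorial : ℝ) * Real.sqrt Real.pi)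
      = 2 / (n.factorial : ℝ) * d ^ n := by
    have hπ : Real.sqrt Real.pi ≠ 0 := by positivity
    have h5 : ((n.factorial : ℝ)) ≠ 0 := by positivity
    field_simp
  refine Tendsto.congr' hkey.symm ?_
  rw [← hfinal, ← hval]
  exact hlim.const_mul _
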